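/- Let g_1,…,g_T be admissible revenue functions with base prices p_t = g_t'(0), let π ≥ 1, and let v̄_1,…,v̄_T be a CR-Pursuit(π) trajectory for this input. Then for every threshold p ∈ [m,M], the total online revenue collected in the slots whose base price is at most p satisfies ∑_{t : p_t ≤ p} g_t(v̄_t) ≤ (1/π)·p·Δ. -/

import Mathlib

open Finset Set

/-- An admissible revenue function on `[0, Δ]` with base price in `[m, M]`. -/
def Admissible (Δ m M : ℝ) (g : ℝ → ℝ) : Prop :=
  ConcaveOn ℝ (Set.Icc 0 Δ) g ∧ MonotoneOn g (Set.Icc 0 Δ) ∧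
  (∀ x ∈ Set.Icc (0:ℝ) Δ, DifferentiableAt ℝ g x) ∧
  g 0 = 0 ∧ deriv g 0 ∈ Set.Icc m M

/-- Offline optimum for the first `n` revenue functions with inventory `Δ`. -/
noncomputable def eta (Δ : ℝ) (g : ℕ → ℝ → ℝ) (n : ℕ) : ℝ :=
  sSup { r : ℝ | ∃ v : ℕ → ℝ, (∀ t < n, 0 ≤ v t) ∧
    (∑ t ∈ Finset.range n, v t) ≤ Δ ∧ r = ∑ t ∈ Finset.range n, g t (v t) }

/-- A CR-Pursuit(π) trajectory for the first T revenue functions. -/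
def CRTraj (Δ : ℝ) (g : ℕ → ℝ → ℝ) (T : ℕ) (pi : ℝ) (v : ℕ → ℝ) : Prop :=
  ∀ t < T, v t ∈ Set.Icc 0 Δ ∧ pi * g t (v t) = eta Δ g (t+1) - eta Δ g t

namespace CRAux

def feasSet (Δ : ℝ) (g : ℕ → ℝ → ℝ) (A : Finset ℕ) : Set ℝ :=
  { r : ℝ | ∃ v : ℕ → ℝ, (∀ t ∈ A, 0 ≤ v t) ∧ (∑ t ∈ A, v t) ≤ Δ ∧ r = ∑ t ∈ A, g t (v t) }

noncomputable def etaS (Δ : ℝ) (g : ℕ → ℝ → ℝ) (A : Finset ℕ) : ℝ :=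
  sSup (feasSet Δ g A)

variable {Δ m M p : ℝ} {g : ℕ → ℝ → ℝ} {A B : Finset ℕ}

/-- tangent-line bound -/
lemma adm_lin {g₀ : ℝ → ℝ} (h : Admissible Δ m M g₀) {x : ℝ}
    (hx : x ∈ Set.Icc (0:ℝ) Δ) : g₀ x ≤ deriv g₀ 0 * x := by
  obtain ⟨hc, _, hd, h0, _⟩ := h
  rcases eq_or_lt_of_le hx.1 with heq | hlt
  · simp [← heq, h0]
  · have h0m : (0:ℝ) ∈ Set.Icc (0:ℝ) Δ := ⟨le_refl _, hx.1.trans hx.2⟩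
    have := hc.slope_le_deriv h0m hx hlt (hd 0 h0m)
    rw [slope_def_field, h0] at this
    have hxne : x ≠ 0 := ne_of_gt hlt
    calc g₀ x = (g₀ x - 0) / (x - 0) * x := by field_simp; ring
    _ ≤ deriv g₀ 0 * x := by
        apply mul_le_mul_of_nonneg_right _ (le_of_lt hlt)
        simpa [div_eq_iff hxne] using this

lemma vmem {v : ℕ → ℝ} (hv : ∀ t ∈ A, 0 ≤ v t) (hs : (∑ t ∈ A, v t) ≤ Δ)
    {t : ℕ} (ht : t ∈ A) : v t ∈ Set.Icc (0:ℝ) Δ :=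
  ⟨hv t ht, le_trans (Finset.single_le_sum (fun s hs => hv s hs) ht) hs⟩

lemma feas_le (hp : 0 ≤ p) (hb : ∀ t ∈ A, ∀ x ∈ Set.Icc (0:ℝ) Δ, g t x ≤ p * x)
    {r : ℝ} (hr : r ∈ feasSet Δ g A) : r ≤ p * Δ := by
  obtain ⟨v, hv, hs, rfl⟩ := hr
  calc ∑ t ∈ A, g t (v t) ≤ ∑ t ∈ A, p * v t :=
        Finset.sum_le_sum fun t ht => hb t ht (v t) (vmem hv hs ht)
  _ = p * ∑ t ∈ A, v t := by rw [Finset.mul_sum]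
  _ ≤ p * Δ := mul_le_mul_of_nonneg_left hs hp

lemma adm_bound (hmM : m ≤ M) (hA : ∀ t ∈ A, Admissible Δ m M (g t)) :
    ∀ t ∈ A, ∀ x ∈ Set.Icc (0:ℝ) Δ, g t x ≤ M * x := fun t ht x hx =>
  le_trans (adm_lin (hA t ht) hx) (mul_le_mul_of_nonneg_right ((hA t ht).2.2.2.2.2) hx.1)

lemma feas_bdd (hM : 0 ≤ M) (hmM : m ≤ M) (hA : ∀ t ∈ A, Admissible Δ m M (g t)) :
    BddAbove (feasSet Δ g A) :=
  ⟨M * Δ, fun _ hr => feas_le hM (adm_bound hmM hA) hr⟩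

lemma feas_nonempty (hΔ : 0 ≤ Δ) : (feasSet Δ g A).Nonempty :=
  ⟨∑ t ∈ A, g t 0, fun _ => 0, fun _ _ => le_refl _, by simpa, rfl⟩

lemma le_etaS (hM : 0 ≤ M) (hmM : m ≤ M) (hA : ∀ t ∈ A, Admissible Δ m M (g t))
    {v : ℕ → ℝ} (hv : ∀ t ∈ A, 0 ≤ v t) (hs : (∑ t ∈ A, v t) ≤ Δ) :
    (∑ t ∈ A, g t (v t)) ≤ etaS Δ g A :=
  le_csSup (feas_bdd hM hmM hA) ⟨v, hv, hs, rfl⟩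

lemma etaS_le (hΔ : 0 ≤ Δ) (hp : 0 ≤ p)
    (hb : ∀ t ∈ A, ∀ x ∈ Set.Icc (0:ℝ) Δ, g t x ≤ p * x) :
    etaS Δ g A ≤ p * Δ :=
  csSup_le (feas_nonempty hΔ) fun _ hr => feas_le hp hb hr

lemma eta_eq_etaS (n : ℕ) : eta Δ g n = etaS Δ g (Finset.range n) := by
  unfold eta etaS feasSet
  congr 1
  ext r
  constructor
  · rintro ⟨v, hv, hs, rfl⟩
    exact ⟨v, fun t ht => hv t (Finset.mem_range.mp ht), hs, rfl⟩
  · rintro ⟨v, hv, hs, rfl⟩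
    exact ⟨v, fun t ht => hv t (Finset.mem_range.mpr ht), hs, rfl⟩

lemma etaS_empty (hΔ : 0 ≤ Δ) : etaS Δ g (∅ : Finset ℕ) = 0 := by
  have : feasSet Δ g (∅ : Finset ℕ) = {0} := by
    ext r
    constructor
    · rintro ⟨v, _, _, rfl⟩; simp
    · rintro rfl; exact ⟨fun _ => 0, by simp, by simpa, by simp⟩
  rw [etaS, this, csSup_singleton]

/-- submodularity exchange -/
lemma submod (hΔ : 0 < Δ) (hM : 0 ≤ M) (hmM : m ≤ M) {t : ℕ}
    (hBA : B ⊆ A) (htA : t ∉ A)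
    (hadm : ∀ s ∈ insert t A, Admissible Δ m M (g s)) :
    etaS Δ g (insert t A) + etaS Δ g B ≤ etaS Δ g A + etaS Δ g (insert t B) := by
  have hBt : t ∉ B := fun h => htA (hBA h)
  have hadmA : ∀ s ∈ A, Admissible Δ m M (g s) := fun s hs =>
    hadm s (Finset.mem_insert_of_mem hs)
  have hadmB : ∀ s ∈ B, Admissible Δ m M (g s) := fun s hs => hadmA s (hBA hs)
  have hadmtB : ∀ s ∈ insert t B, Admissible Δ m M (g s) := by
    intro s hs
    rcases Finset.mem_insert.mp hs with rfl | hs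
    · exact hadm s (Finset.mem_insert_self _ _)
    · exact hadmB s hs
  have key : ∀ r ∈ feasSet Δ g (insert t A), ∀ q ∈ feasSet Δ g B,
      r + q ≤ etaS Δ g A + etaS Δ g (insert t B) := by
    rintro r ⟨u, hu, hus, rfl⟩ q ⟨w, hw, hws, rfl⟩
    set Wb := ∑ s ∈ B, w s with hWbdef
    set Sm := ∑ s ∈ B, min (u s) (w s) with hSmdef
    have hut : 0 ≤ u t := hu t (Finset.mem_insert_self t A)
    have hsumA : u t + ∑ s ∈ A, u s ≤ Δ := by rwa [Finset.sum_insert htA] at hus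
    have huA : ∀ s ∈ A, 0 ≤ u s := fun s hs => hu s (Finset.mem_insert_of_mem hs)
    have hSmUb : Sm ≤ ∑ s ∈ A, u s := by
      calc Sm ≤ ∑ s ∈ B, u s := Finset.sum_le_sum fun s _ => min_le_left _ _
      _ ≤ ∑ s ∈ A, u s :=
          Finset.sum_le_sum_of_subset_of_nonneg hBA fun s hs _ => huA s hs
    have hSmWb : Sm ≤ Wb := Finset.sum_le_sum fun s _ => min_le_right _ _
    set θ := if Wb ≤ Δ - u t then (0:ℝ) else (Wb - (Δ - u t)) / (Wb - Sm) with hθdef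
    obtain ⟨hθ0, hθ1, fact1, fact2⟩ :
        0 ≤ θ ∧ θ ≤ 1 ∧ Wb - θ * (Wb - Sm) ≤ Δ - u t ∧
          (∑ s ∈ A, u s) + θ * (Wb - Sm) ≤ Δ := by
      by_cases hcase : Wb ≤ Δ - u t
      · rw [hθdef, if_pos hcase]
        refine ⟨le_refl _, zero_le_one, by linarith, by linarith⟩
      · rw [hθdef, if_neg hcase]
        push_neg at hcase
        have hden : 0 < Wb - Sm := by linarith
        have hdiv : (Wb - (Δ - u t)) / (Wb - Sm) * (Wb - Sm) = Wb - (Δ - u t) :=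
          div_mul_cancel₀ _ (ne_of_gt hden)
        refine ⟨le_of_lt (div_pos (by linarith) hden),
          (div_le_one hden).mpr (by linarith),
          by rw [hdiv]; linarith, by rw [hdiv]; linarith⟩
    set b : ℕ → ℝ := fun s => if s = t then u t else (1 - θ) * w s + θ * min (u s) (w s)
      with hbdef
    set a : ℕ → ℝ := fun s => if s ∈ B then u s + w s - b s else u s with hadef
    have hbB : ∀ s ∈ B, b s = (1 - θ) * w s + θ * min (u s) (w s) := by
      intro s hs
      rw [hbdef]
      exact if_neg (fun (h : s = t) => hBt (h ▸ hs))
    have haB : ∀ s ∈ B, a s = u s + θ * (w s - min (u s) (w s)) := by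
      intro s hs
      simp only [hadef, if_pos hs, hbB s hs]
      ring
    have haAB : ∀ s ∈ A \ B, a s = u s := by
      intro s hs
      simp only [hadef, if_neg (Finset.mem_sdiff.mp hs).2]
    -- feasibility of b on insert t B
    have hbnn : ∀ s ∈ insert t B, 0 ≤ b s := by
      intro s hs
      rcases Finset.mem_insert.mp hs with rfl | hs
      · rw [hbdef]; simpa using hut
      · rw [hbB s hs]
        have h1 : 0 ≤ w s := hw s hs
        have h2 : 0 ≤ min (u s) (w s) :=
          le_min (hu s (Finset.mem_insert_of_mem (hBA hs))) h1
        nlinarith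
    have hbsumB : ∑ s ∈ B, b s = (1 - θ) * Wb + θ * Sm := by
      rw [Finset.sum_congr rfl hbB, Finset.sum_add_distrib, ← Finset.mul_sum, ← Finset.mul_sum]
    have hbsum : ∑ s ∈ insert t B, b s ≤ Δ := by
      rw [Finset.sum_insert hBt, hbsumB]
      have : b t = u t := by rw [hbdef]; simp
      rw [this]
      nlinarith [fact1]
    -- feasibility of a on A
    have hann : ∀ s ∈ A, 0 ≤ a s := by
      intro s hs
      by_cases hsB : s ∈ B
      · rw [haB s hsB]
        have : min (u s) (w s) ≤ w s := min_le_right _ _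
        nlinarith [huA s hs]
      · simp only [hadef, if_neg hsB]; exact huA s hs
    have hasumB : ∑ s ∈ B, a s = (∑ s ∈ B, u s) + θ * (Wb - Sm) := by
      rw [Finset.sum_congr rfl haB, Finset.sum_add_distrib, ← Finset.mul_sum,
        Finset.sum_sub_distrib]
    have hasum : ∑ s ∈ A, a s ≤ Δ := by
      have hsd : ∑ s ∈ A \ B, a s + ∑ s ∈ B, a s = ∑ s ∈ A, a s := Finset.sum_sdiff hBA
      have hsd' : ∑ s ∈ A \ B, u s + ∑ s ∈ B, u s = ∑ s ∈ A, u s := Finset.sum_sdiff hBA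
      have he : ∑ s ∈ A \ B, a s = ∑ s ∈ A \ B, u s := Finset.sum_congr rfl haAB
      rw [← hsd, he, hasumB]
      linarith
    -- pointwise value inequality on B
    have hval : ∀ s ∈ B, g s (u s) + g s (w s) ≤ g s (a s) + g s (b s) := by
      intro s hs
      have hus' : u s ∈ Set.Icc (0:ℝ) Δ :=
        vmem hu hus (Finset.mem_insert_of_mem (hBA hs))
      have hws' : w s ∈ Set.Icc (0:ℝ) Δ := vmem hw hws hs
      have hconc := (hadmB s hs).1
      have hbs := hbB s hs
      have has := haB s hs
      rcases le_total (w s) (u s) with hle | hle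
      · rw [min_eq_right hle] at hbs has
        have e1 : b s = w s := by rw [hbs]; ring
        have e2 : a s = u s := by rw [has]; ring
        rw [e1, e2]
      · rw [min_eq_left hle] at hbs has
        have h1 := hconc.2 hus' hws' (by linarith : (0:ℝ) ≤ 1 - θ) hθ0 (by ring)
        have h2 := hconc.2 hus' hws' hθ0 (by linarith : (0:ℝ) ≤ 1 - θ) (by ring)
        simp only [smul_eq_mul] at h1 h2
        have ea : a s = (1 - θ) * u s + θ * w s := by rw [has]; ring
        have eb : b s = θ * u s + (1 - θ) * w s := by rw [hbs]; ring
        rw [ea, eb]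
        linarith
    -- assemble
    have hA1 : ∑ s ∈ A, g s (a s) ≤ etaS Δ g A := le_etaS hM hmM hadmA hann hasum
    have hB1 : ∑ s ∈ insert t B, g s (b s) ≤ etaS Δ g (insert t B) :=
      le_etaS hM hmM hadmtB hbnn hbsum
    have hsplitu : ∑ s ∈ insert t A, g s (u s)
        = g t (u t) + (∑ s ∈ A \ B, g s (u s) + ∑ s ∈ B, g s (u s)) := by
      rw [Finset.sum_insert htA, Finset.sum_sdiff hBA]
    have hsplita : ∑ s ∈ A, g s (a s)
        = ∑ s ∈ A \ B, g s (u s) + ∑ s ∈ B, g s (a s) := by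
      rw [← Finset.sum_sdiff hBA, Finset.sum_congr rfl (fun s hs => by rw [haAB s hs])]
    have hsplitb : ∑ s ∈ insert t B, g s (b s) = g t (u t) + ∑ s ∈ B, g s (b s) := by
      rw [Finset.sum_insert hBt]
      congr 1
      rw [hbdef]; simp
    have hsumval : ∑ s ∈ B, g s (u s) + ∑ s ∈ B, g s (w s)
        ≤ ∑ s ∈ B, g s (a s) + ∑ s ∈ B, g s (b s) := by
      rw [← Finset.sum_add_distrib, ← Finset.sum_add_distrib]
      exact Finset.sum_le_sum hval
    linarith [hA1, hB1]
  have h2 : etaS Δ g (insert t A) ≤ etaS Δ g A + etaS Δ g (insert t B) - etaS Δ g B := by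
    apply csSup_le (feas_nonempty hΔ.le)
    intro r hr
    have h3 : etaS Δ g B ≤ etaS Δ g A + etaS Δ g (insert t B) - r := by
      apply csSup_le (feas_nonempty hΔ.le)
      intro q hq
      linarith [key r hr q hq]
    linarith
  linarith

end CRAux


namespace CRAux

lemma telescope (hΔ : 0 < Δ) (hM : 0 ≤ M) (hmM : m ≤ M) {T : ℕ}
    (hg : ∀ t < T, Admissible Δ m M (g t)) (P : ℕ → Prop) [DecidablePred P] :
    ∀ n ≤ T, ∑ t ∈ (Finset.range n).filter P, (eta Δ g (t+1) - eta Δ g t)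
      ≤ etaS Δ g ((Finset.range n).filter P) := by
  intro n
  induction n with
  | zero => intro _; simp [etaS_empty hΔ.le]
  | succ n ih =>
    intro hn
    have hn' : n ≤ T := Nat.le_of_succ_le hn
    have ihn := ih hn'
    rw [Finset.range_add_one, Finset.filter_insert]
    by_cases hP : P n
    · rw [if_pos hP]
      have hnotin : n ∉ (Finset.range n).filter P := by simp
      have hnotin' : n ∉ Finset.range n := Finset.notMem_range_self
      have hadm : ∀ s ∈ insert n (Finset.range n), Admissible Δ m M (g s) := by
        intro s hs
        rcases Finset.mem_insert.mp hs with rfl | hs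
        · exact hg s hn
        · exact hg s (lt_of_lt_of_le (Finset.mem_range.mp hs) hn')
      have hsub := submod hΔ hM hmM (Finset.filter_subset P (Finset.range n))
        hnotin' hadm
      rw [Finset.sum_insert hnotin]
      have e1 : eta Δ g (n+1) = etaS Δ g (insert n (Finset.range n)) := by
        rw [eta_eq_etaS, Finset.range_add_one]
      have e2 : eta Δ g n = etaS Δ g (Finset.range n) := eta_eq_etaS n
      rw [e1, e2]
      linarith
    · rw [if_neg hP]
      exact ihn

end CRAux

theorem stmt8 (Δ m M : ℝ) (hΔ : 0 < Δ) (hm : 0 < m) (hmM : m ≤ M)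
    (T : ℕ) (g : ℕ → ℝ → ℝ) (hg : ∀ t < T, Admissible Δ m M (g t))
    (pi : ℝ) (hpi : 1 ≤ pi)
    (vb : ℕ → ℝ) (htraj : CRTraj Δ g T pi vb)
    (p : ℝ) (hp : p ∈ Set.Icc m M) :
    ∑ t ∈ (Finset.range T).filter (fun t => deriv (g t) 0 ≤ p), g t (vb t) ≤
      (1 / pi) * p * Δ := by
  have hpip : (0:ℝ) < pi := lt_of_lt_of_le one_pos hpi
  have hM : (0:ℝ) ≤ M := le_trans hm.le hmM
  have hp0 : (0:ℝ) ≤ p := le_trans hm.le hp.1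
  set S := (Finset.range T).filter (fun t => deriv (g t) 0 ≤ p) with hSdef
  have hstep : ∀ t ∈ S, g t (vb t) = (1 / pi) * (eta Δ g (t+1) - eta Δ g t) := by
    intro t ht
    have htT : t < T := Finset.mem_range.mp (Finset.mem_filter.mp ht).1
    have := (htraj t htT).2
    field_simp
    linarith [this]
  rw [Finset.sum_congr rfl hstep, ← Finset.mul_sum]
  have htel := CRAux.telescope hΔ hM hmM hg (fun t => deriv (g t) 0 ≤ p) T (le_refl T)
  have hbound : CRAux.etaS Δ g S ≤ p * Δ := by
    apply CRAux.etaS_le hΔ.le hp0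
    intro t ht x hx
    have htm := Finset.mem_filter.mp ht
    have htT : t < T := Finset.mem_range.mp htm.1
    calc g t x ≤ deriv (g t) 0 * x := CRAux.adm_lin (hg t htT) hx
    _ ≤ p * x := mul_le_mul_of_nonneg_right htm.2 hx.1
  have h1pi : (0:ℝ) < 1 / pi := by positivity
  calc (1 / pi) * ∑ t ∈ S, (eta Δ g (t+1) - eta Δ g t)
      ≤ (1 / pi) * (CRAux.etaS Δ g S) := by
        apply mul_le_mul_of_nonneg_left _ h1pi.le
        exact htel
  _ ≤ (1 / pi) * (p * Δ) := mul_le_mul_of_nonneg_left hbound h1pi.le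
  _ = (1 / pi) * p * Δ := by ring
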